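/- Let b_{j}^{(n)} be the variable-step BDF2 kernels and define the DCC kernels p by Σ_{j=k}^{n} p_{n−j}^{(n)} b_{j−k}^{(j)} = 1 for all 1 ≤ k ≤ n. Then p_{n−j}^{(n)} = Σ_{l=j}^{n} θ_{l−j}^{(l)} and θ_{n−j}^{(n)} = p_{n−j}^{(n)} − p_{n−1−j}^{(n−1)} for 1 ≤ j ≤ n, where θ are the DOC kernels and p_{−1}^{(n)} := 0. -/
import Mathlib


open Finset

/-- Relations between the DCC kernels `p` (defined by the all-ones identity (4.42)) and
the DOC kernels `θ` (defined by the orthogonality identity (3.23)) for the variable-step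
BDF2 kernels `b`. Here `b j k = b_{j-k}^{(j)}`, `θ n j = θ_{n-j}^{(n)}`,
`p n j = p_{n-j}^{(n)}`, with the convention `p_{-1}^{(n)} = 0`, i.e. `p n (n+1) = 0`. -/
theorem dcc_doc_relation (τ : ℕ → ℝ) (hτ : ∀ n, 1 ≤ n → 0 < τ n)
    (r : ℕ → ℝ) (hr : ∀ n, 2 ≤ n → r n = τ n / τ (n - 1))
    (b : ℕ → ℕ → ℝ)
    (hb11 : b 1 1 = 1 / τ 1)
    (hb0 : ∀ n, 2 ≤ n → b n n = (1 + 2 * r n) / (τ n * (1 + r n)))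
    (hb1 : ∀ n, 2 ≤ n → b n (n - 1) = -(r n) ^ 2 / (τ n * (1 + r n)))
    (hbz : ∀ n k, k + 2 ≤ n → b n k = 0)
    (θ : ℕ → ℕ → ℝ)
    (hθ : ∀ k n, 1 ≤ k → k ≤ n →
      ∑ j ∈ Icc k n, θ n j * b j k = if n = k then 1 else 0)
    (p : ℕ → ℕ → ℝ)
    (hp : ∀ k n, 1 ≤ k → k ≤ n → ∑ j ∈ Icc k n, p n j * b j k = 1)
    (hpneg : ∀ n, p n (n + 1) = 0) :
    ∀ j n, 1 ≤ j → j ≤ n →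
      p n j = (∑ l ∈ Icc j n, θ l j) ∧ θ n j = p n j - p (n - 1) j := by
  -- the diagonal entries of the lower-triangular system are nonzero
  have hbkk : ∀ k, 1 ≤ k → b k k ≠ 0 := by
    intro k hk
    rcases eq_or_lt_of_le hk with h1 | h2
    · rw [← h1, hb11]
      have := hτ 1 le_rfl
      positivity
    · have hk2 : 2 ≤ k := h2
      have hrpos : 0 < r k := by
        rw [hr k hk2]
        exact div_pos (hτ k (by omega)) (hτ (k - 1) (by omega))
      have hτpos := hτ k (by omega)
      rw [hb0 k hk2]
      positivity
  -- uniqueness of solutions of the triangular system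
  have uniq : ∀ n (x y : ℕ → ℝ),
      (∀ k, 1 ≤ k → k ≤ n → ∑ j ∈ Icc k n, x j * b j k = ∑ j ∈ Icc k n, y j * b j k) →
      ∀ k, 1 ≤ k → k ≤ n → x k = y k := by
    intro n x y hxy
    have key : ∀ m k, 1 ≤ k → k ≤ n → n - k ≤ m → x k = y k := by
      intro m
      induction m with
      | zero =>
        intro k hk1 hkn hm
        have hkn' : k = n := by omega
        subst hkn'
        have h := hxy k hk1 le_rfl
        simp only [Icc_self, sum_singleton] at h
        exact mul_right_cancel₀ (hbkk k hk1) h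
      | succ m ih =>
        intro k hk1 hkn hm
        have h := hxy k hk1 hkn
        have hins : Icc k n = insert k (Icc (k + 1) n) := by
          ext x; simp only [mem_Icc, mem_insert]; omega
        have hkni : k ∉ Icc (k + 1) n := by simp [mem_Icc]
        rw [hins, sum_insert hkni, sum_insert hkni] at h
        have hrest : ∑ j ∈ Icc (k + 1) n, x j * b j k
            = ∑ j ∈ Icc (k + 1) n, y j * b j k := by
          refine sum_congr rfl fun j hj => ?_
          simp only [mem_Icc] at hj
          rw [ih j (by omega) hj.2 (by omega)]
        have h' : x k * b k k = y k * b k k := by linarith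
        exact mul_right_cancel₀ (hbkk k hk1) h'
    intro k hk1 hkn
    exact key (n - k) k hk1 hkn le_rfl
  -- the partial sums of the DOC kernels satisfy the DCC identity
  have hq : ∀ k n, 1 ≤ k → k ≤ n →
      ∑ j ∈ Icc k n, (∑ l ∈ Icc j n, θ l j) * b j k = 1 := by
    intro k n hk hkn
    have h1 : ∑ j ∈ Icc k n, (∑ l ∈ Icc j n, θ l j) * b j k
        = ∑ j ∈ Icc k n, ∑ l ∈ Icc j n, θ l j * b j k := by
      refine sum_congr rfl fun j _ => by rw [sum_mul]
    rw [h1]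
    rw [sum_comm' (t' := Icc k n) (s' := fun l => Icc k l)
      (by intro x y; simp only [mem_Icc]; omega)]
    have h2 : ∀ l ∈ Icc k n, ∑ j ∈ Icc k l, θ l j * b j k = if l = k then 1 else 0 := by
      intro l hl
      simp only [mem_Icc] at hl
      exact hθ k l hk hl.1
    rw [sum_congr rfl h2, sum_ite_eq' (Icc k n) k (fun _ => (1 : ℝ))]
    simp [mem_Icc, hk, hkn]
  -- identification of p with the partial sums of θ
  have hpq : ∀ m i, 1 ≤ i → i ≤ m → p m i = ∑ l ∈ Icc i m, θ l i := by
    intro m i hi him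
    exact uniq m (p m) (fun i => ∑ l ∈ Icc i m, θ l i)
      (fun k hk hkm => by rw [hp k m hk hkm, hq k m hk hkm]) i hi him
  intro j n hj hjn
  refine ⟨hpq n j hj hjn, ?_⟩
  rcases eq_or_lt_of_le hjn with h | h
  · subst h
    have h0 : p (j - 1) j = 0 := by
      have := hpneg (j - 1)
      rwa [Nat.sub_add_cancel hj] at this
    rw [hpq j j hj le_rfl, h0, Icc_self, sum_singleton, sub_zero]
  · have hjn1 : j ≤ n - 1 := by omega
    rw [hpq n j hj hjn, hpq (n - 1) j hj hjn1]
    have hins : Icc j n = insert n (Icc j (n - 1)) := by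
      ext x; simp only [mem_Icc, mem_insert]; omega
    have hni : n ∉ Icc j (n - 1) := by simp [mem_Icc]; omega
    rw [hins, sum_insert hni]
    ring
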